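/- arXiv:1105.4698 — 3 statements merged into one kernel-verified Lean document; each statement's English description precedes it below -/
import Mathlib

section
/- Let S be a discrete valuation ring with uniformizer x, let n ≥ 2 be an integer, and set R = S/(x^n). For each integer i with 1 ≤ i ≤ n−1, the sequence of R-modules 0 → R/(x^i) → R/(x^{i−1}) ⊕ R/(x^{i+1}) → R/(x^i) → 0, in which the first map sends the class of a to (class of a, class of ax) and the second map sends (class of a, class of b) to the class of ax − b, is a short exact sequence which does not split. -/
lemma aux_zero_iff {S : Type} [CommRing S] (x : S) (n k : ℕ) (hk : k ≤ n) (s : S) :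
    Ideal.Quotient.mk (Ideal.span {(Ideal.Quotient.mk (Ideal.span {x ^ n}) x) ^ k})
      (Ideal.Quotient.mk (Ideal.span {x ^ n}) s) = 0 ↔ x ^ k ∣ s := by
  rw [Ideal.Quotient.eq_zero_iff_mem, ← map_pow,
    show Ideal.span {Ideal.Quotient.mk (Ideal.span {x ^ n}) (x ^ k)} =
      (Ideal.span {x ^ k}).map (Ideal.Quotient.mk (Ideal.span {x ^ n})) from by
        rw [Ideal.map_span, Set.image_singleton],
    Ideal.mem_quotient_iff_mem_sup,
    sup_eq_left.mpr (Ideal.span_singleton_le_span_singleton.mpr (pow_dvd_pow x hk)),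
    Ideal.mem_span_singleton]

lemma aux_eq_iff {S : Type} [CommRing S] (x : S) (n k : ℕ) (hk : k ≤ n) (s t : S) :
    Ideal.Quotient.mk (Ideal.span {(Ideal.Quotient.mk (Ideal.span {x ^ n}) x) ^ k})
      (Ideal.Quotient.mk (Ideal.span {x ^ n}) s) =
    Ideal.Quotient.mk (Ideal.span {(Ideal.Quotient.mk (Ideal.span {x ^ n}) x) ^ k})
      (Ideal.Quotient.mk (Ideal.span {x ^ n}) t) ↔ x ^ k ∣ s - t := by
  rw [← sub_eq_zero, ← map_sub, ← map_sub, aux_zero_iff x n k hk]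

lemma aux_smul {R : Type} [CommRing R] (I : Ideal R) (r m : R) :
    r • Ideal.Quotient.mk I m = Ideal.Quotient.mk I (r * m) := by
  rw [← Ideal.Quotient.mk_eq_mk, ← Ideal.Quotient.mk_eq_mk, ← Submodule.Quotient.mk_smul,
    smul_eq_mul]



/-- Let `S` be a discrete valuation ring with uniformizer `x`, let `n ≥ 2`
and set `R = S/(xⁿ)`, writing `y` for the image of `x` in `R`.  For `1 ≤ i ≤ n - 1`, the
`R`-linear maps
`f : R/(yⁱ) → R/(yⁱ⁻¹) ⊕ R/(yⁱ⁺¹)`, `a ↦ (a, a·y)`, and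
`g : R/(yⁱ⁻¹) ⊕ R/(yⁱ⁺¹) → R/(yⁱ)`, `(a, b) ↦ a·y − b`
(here quantified over all linear maps satisfying these formulas on classes, which
determine them uniquely) form a short exact sequence
`0 → R/(yⁱ) → R/(yⁱ⁻¹) ⊕ R/(yⁱ⁺¹) → R/(yⁱ) → 0` which does not split. -/
theorem auslander_reiten_sequence_of_artinian_hypersurface
    (S : Type) [CommRing S] [IsDomain S] [IsDiscreteValuationRing S]
    (x : S) (hx : IsLocalRing.maximalIdeal S = Ideal.span {x})
    (n : ℕ) (hn : 2 ≤ n) (i : ℕ) (hi1 : 1 ≤ i) (hi2 : i ≤ n - 1)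
    (y : S ⧸ Ideal.span {x ^ n}) (hy : y = Ideal.Quotient.mk (Ideal.span {x ^ n}) x)
    (f : ((S ⧸ Ideal.span {x ^ n}) ⧸ Ideal.span {y ^ i}) →ₗ[S ⧸ Ideal.span {x ^ n}]
      ((S ⧸ Ideal.span {x ^ n}) ⧸ Ideal.span {y ^ (i - 1)}) ×
        ((S ⧸ Ideal.span {x ^ n}) ⧸ Ideal.span {y ^ (i + 1)}))
    (hf : ∀ a : S ⧸ Ideal.span {x ^ n},
      f (Ideal.Quotient.mk (Ideal.span {y ^ i}) a) =
        (Ideal.Quotient.mk (Ideal.span {y ^ (i - 1)}) a,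
          Ideal.Quotient.mk (Ideal.span {y ^ (i + 1)}) (a * y)))
    (g : (((S ⧸ Ideal.span {x ^ n}) ⧸ Ideal.span {y ^ (i - 1)}) ×
        ((S ⧸ Ideal.span {x ^ n}) ⧸ Ideal.span {y ^ (i + 1)}))
      →ₗ[S ⧸ Ideal.span {x ^ n}] ((S ⧸ Ideal.span {x ^ n}) ⧸ Ideal.span {y ^ i}))
    (hg : ∀ a b : S ⧸ Ideal.span {x ^ n},
      g (Ideal.Quotient.mk (Ideal.span {y ^ (i - 1)}) a,
          Ideal.Quotient.mk (Ideal.span {y ^ (i + 1)}) b) =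
        Ideal.Quotient.mk (Ideal.span {y ^ i}) (a * y - b)) :
    Function.Injective f ∧ LinearMap.range f = LinearMap.ker g ∧ Function.Surjective g ∧
      ¬ ∃ s : ((S ⧸ Ideal.span {x ^ n}) ⧸ Ideal.span {y ^ i}) →ₗ[S ⧸ Ideal.span {x ^ n}]
          ((S ⧸ Ideal.span {x ^ n}) ⧸ Ideal.span {y ^ (i - 1)}) ×
            ((S ⧸ Ideal.span {x ^ n}) ⧸ Ideal.span {y ^ (i + 1)}),
          g.comp s = LinearMap.id := by
  subst hy
  have hirr : Irreducible x := (IsDiscreteValuationRing.irreducible_iff_uniformizer x).mpr hx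
  have hx0 : x ≠ 0 := hirr.ne_zero
  have hin : i + 1 ≤ n := by omega
  have hin' : i ≤ n := by omega
  have hin'' : i - 1 ≤ n := by omega
  have hπ : True := trivial
  have hcancel : ∀ s : S, x ^ (i + 1) ∣ s * x → x ^ i ∣ s := by
    rintro s ⟨c, hc⟩
    refine ⟨c, mul_right_cancel₀ hx0 ?_⟩
    rw [hc, pow_succ]; ring
  refine ⟨?_, ?_, ?_, ?_⟩
  · -- injective
    have hker : ∀ c, f c = 0 → c = 0 := by
      intro c hc
      obtain ⟨a, rfl⟩ := Ideal.Quotient.mk_surjective c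
      obtain ⟨s, rfl⟩ := Ideal.Quotient.mk_surjective a
      rw [hf] at hc
      have h2 := (Prod.ext_iff.mp hc).2
      rw [← map_mul] at h2
      exact (aux_zero_iff x n i hin' s).mpr
        (hcancel s ((aux_zero_iff x n (i + 1) hin (s * x)).mp h2))
    intro a b hab
    have := hker (a - b) (by rw [map_sub, hab, sub_self])
    exact sub_eq_zero.mp this
  · -- exactness
    apply le_antisymm
    · rintro _ ⟨c, rfl⟩
      obtain ⟨a, rfl⟩ := Ideal.Quotient.mk_surjective c
      rw [LinearMap.mem_ker, hf, hg, sub_self, map_zero]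
    · rintro ⟨α, β⟩ hp
      obtain ⟨a, rfl⟩ := Ideal.Quotient.mk_surjective α
      obtain ⟨s, rfl⟩ := Ideal.Quotient.mk_surjective a
      obtain ⟨b, rfl⟩ := Ideal.Quotient.mk_surjective β
      obtain ⟨t, rfl⟩ := Ideal.Quotient.mk_surjective b
      rw [LinearMap.mem_ker, hg, ← map_mul, ← map_sub] at hp
      obtain ⟨c, hceq⟩ := (aux_zero_iff x n i hin' _).mp hp
      refine ⟨Ideal.Quotient.mk _ ((Ideal.Quotient.mk (Ideal.span {x ^ n})) (s - x ^ (i - 1) * c)), ?_⟩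
      rw [hf]
      have hpow : x ^ (i - 1) * x = x ^ i := by
        rw [← pow_succ]; congr 1; omega
      have hux : (s - x ^ (i - 1) * c) * x = t := by
        linear_combination hceq - c * hpow
      refine Prod.ext ?_ ?_
      · exact (aux_eq_iff x n (i - 1) hin'' _ _).mpr ⟨-c, by ring⟩
      · show Ideal.Quotient.mk _ ((Ideal.Quotient.mk (Ideal.span {x ^ n})) (s - x ^ (i - 1) * c) * (Ideal.Quotient.mk (Ideal.span {x ^ n})) x) = Ideal.Quotient.mk _ ((Ideal.Quotient.mk (Ideal.span {x ^ n})) t)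
        rw [← map_mul, hux]
  · -- surjective
    intro c
    obtain ⟨a, rfl⟩ := Ideal.Quotient.mk_surjective c
    refine ⟨(Ideal.Quotient.mk _ 0, Ideal.Quotient.mk _ (-a)), ?_⟩
    rw [hg, zero_mul, zero_sub, neg_neg]
  · -- does not split
    rintro ⟨σ, hσ⟩
    set e : (S ⧸ Ideal.span {x ^ n}) ⧸ Ideal.span {(Ideal.Quotient.mk (Ideal.span {x ^ n})) x ^ i} :=
      Ideal.Quotient.mk (Ideal.span {(Ideal.Quotient.mk (Ideal.span {x ^ n})) x ^ i}) ((Ideal.Quotient.mk (Ideal.span {x ^ n})) 1) with he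
    obtain ⟨a, ha⟩ := Ideal.Quotient.mk_surjective (σ e).1
    obtain ⟨a', rfl⟩ := Ideal.Quotient.mk_surjective a
    obtain ⟨b, hb⟩ := Ideal.Quotient.mk_surjective (σ e).2
    obtain ⟨b', rfl⟩ := Ideal.Quotient.mk_surjective b
    have hσe : σ e = (Ideal.Quotient.mk _ ((Ideal.Quotient.mk (Ideal.span {x ^ n})) a'), Ideal.Quotient.mk _ ((Ideal.Quotient.mk (Ideal.span {x ^ n})) b')) := by
      rw [ha, hb]
    have hge : g (σ e) = e := by simpa using LinearMap.congr_fun hσ e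
    rw [hσe, hg, ← map_mul, ← map_sub] at hge
    have h1 : x ^ i ∣ a' * x - b' - 1 := by
      have := (aux_eq_iff x n i hin' (a' * x - b') 1).mp (by rw [hge, he])
      simpa using this
    have hye : ((Ideal.Quotient.mk (Ideal.span {x ^ n})) x ^ i) • e = 0 := by
      rw [he, aux_smul]
      have h0 := (aux_zero_iff x n i hin' (x ^ i * 1)).mpr ⟨1, by ring⟩
      rw [map_mul, map_pow] at h0
      exact h0
    have h2 : ((Ideal.Quotient.mk (Ideal.span {x ^ n})) x ^ i) • σ e = 0 := by rw [← map_smul, hye, map_zero]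
    rw [hσe] at h2
    have h3 : ((Ideal.Quotient.mk (Ideal.span {x ^ n})) x ^ i) • (Ideal.Quotient.mk (Ideal.span {(Ideal.Quotient.mk (Ideal.span {x ^ n})) x ^ (i + 1)}) ((Ideal.Quotient.mk (Ideal.span {x ^ n})) b')) = 0 := by
      have h' := congrArg Prod.snd h2
      simpa only [Prod.smul_snd, Prod.snd_zero] using h'
    have h4 : x ^ (i + 1) ∣ x ^ i * b' := by
      rw [aux_smul] at h3
      refine (aux_zero_iff x n (i + 1) hin _).mp ?_
      rw [map_mul, map_pow]
      exact h3
    have h6 : x ∣ b' := by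
      rw [pow_succ] at h4
      exact (mul_dvd_mul_iff_left (pow_ne_zero i hx0)).mp h4
    have h5 : x ∣ a' * x - b' - 1 := (dvd_pow_self x (show i ≠ 0 by omega)).trans h1
    have h7 : x ∣ a' * x := ⟨a', mul_comm a' x⟩
    have h8 : x ∣ (1 : S) := by
      have := dvd_sub (dvd_sub h7 h6) h5
      simpa using this
    exact hirr.not_isUnit (isUnit_of_dvd_one h8)
end

section
/- Let Q be a commutative ring and let q₁,…,q_c (c ≥ 1) be a regular sequence in Q. Then the sequence q₁,…,q_{c−1}, q₁x₁ + ⋯ + q_{c−1}x_{c−1} + q_c of length c is a regular sequence in the polynomial ring Q[x₁,…,x_{c−1}]. -/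
open MvPolynomial RingTheory.Sequence

section Aux

variable {A : Type} [CommRing A]

private lemma aux_isSMulRegular_C {σ : Type} {a : A} (ha : IsSMulRegular A a) :
    IsSMulRegular (MvPolynomial σ A) (C a : MvPolynomial σ A) := by
  intro p p' h
  ext m
  apply ha
  simpa only [smul_eq_mul, MvPolynomial.coeff_C_mul] using
    congrArg (MvPolynomial.coeff m) h

private lemma aux_smul_top (J : Ideal A) : (J • ⊤ : Submodule A A) = J := by
  rw [smul_eq_mul, Ideal.mul_top]

private lemma aux_quot_iff (J : Ideal A) (r : A) :
    IsSMulRegular (A ⧸ (J • ⊤ : Submodule A A)) r ↔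
      IsSMulRegular (A ⧸ J) (Ideal.Quotient.mk J r) := by
  refine (Submodule.quotEquivOfEq _ _ (aux_smul_top J)).toEquiv.isSMulRegular_congr ?_
  intro x
  obtain ⟨y, rfl⟩ := Submodule.Quotient.mk_surjective _ x
  rfl

private lemma aux_ringEquiv {B : Type} [CommRing B] (e : A ≃+* B) (a : A) :
    IsSMulRegular A a ↔ IsSMulRegular B (e a) :=
  e.toEquiv.isSMulRegular_congr fun x => by
    simp only [smul_eq_mul]
    exact map_mul e a x

end Aux

/-- Let `q₁, …, q_c` (`c = d + 1 ≥ 1`) be a regular sequence in a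
commutative ring `Q`.  Then `q₁, …, q_{c-1}, q₁x₁ + ⋯ + q_{c-1}x_{c-1} + q_c` is a regular
sequence in the polynomial ring `Q[x₁, …, x_{c-1}]`. -/
theorem regular_sequence_generic_hypersurface_section
    (Q : Type) [CommRing Q] (d : ℕ) (q : Fin (d + 1) → Q)
    (hreg : RingTheory.Sequence.IsRegular Q (List.ofFn q)) :
    RingTheory.Sequence.IsRegular (MvPolynomial (Fin d) Q)
      (List.ofFn (fun i : Fin d => (C (q i.castSucc) : MvPolynomial (Fin d) Q)) ++
        [(∑ i : Fin d, C (q i.castSucc) * X i) + C (q (Fin.last d))]) := by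
  set R := MvPolynomial (Fin d) Q with hR
  set f : R := (∑ i : Fin d, C (q i.castSucc) * X i) + C (q (Fin.last d)) with hf
  set I : Ideal Q := Ideal.ofList (List.ofFn fun i : Fin d => q i.castSucc) with hI
  set I' : Ideal Q := Ideal.ofList (List.ofFn q) with hI'
  have hofn : List.ofFn q = (List.ofFn fun i : Fin d => q i.castSucc) ++ [q (Fin.last d)] := by
    rw [List.ofFn_succ' q, List.concat_eq_append]
  obtain ⟨hw, hne⟩ := hreg
  have hI'ne : I' ≠ ⊤ := by
    intro h
    exact hne (by rw [← hI', h, aux_smul_top])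
  rw [hofn, isWeaklyRegular_append_iff] at hw
  obtain ⟨hw1, hw2⟩ := hw
  have hqlast : IsSMulRegular (Q ⧸ I) (Ideal.Quotient.mk I (q (Fin.last d))) := by
    rw [← aux_quot_iff]
    exact ((isWeaklyRegular_singleton_iff _ _).mp hw2)
  -- the ideal generated by the first part
  have hfront : Ideal.ofList (List.ofFn fun i : Fin d => (C (q i.castSucc) : R)) =
      Ideal.map (C : Q →+* R) I := by
    rw [hI, Ideal.map_ofList, List.map_ofFn]
    rfl
  -- membership facts
  have hmemI : ∀ i : Fin d, q i.castSucc ∈ I := fun i =>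
    Ideal.subset_span (List.mem_ofFn.mpr ⟨i, rfl⟩)
  have hmemI' : ∀ j : Fin (d + 1), q j ∈ I' := fun j =>
    Ideal.subset_span (List.mem_ofFn.mpr ⟨j, rfl⟩)
  constructor
  · -- weak regularity
    rw [isWeaklyRegular_append_iff]
    constructor
    · -- the constant part
      have h1 : (List.ofFn fun i : Fin d => (C (q i.castSucc) : R)) =
          (List.ofFn fun i : Fin d => q i.castSucc).map (algebraMap Q R) := by
        rw [List.map_ofFn]; rfl
      rw [h1, isWeaklyRegular_map_algebraMap_iff]
      have h2 := hw1.isWeaklyRegular_lTensor (M₂ := R)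
      exact ((TensorProduct.rid Q R).symm.isWeaklyRegular_congr _).mpr h2
    · -- the last element
      rw [isWeaklyRegular_singleton_iff, hfront, aux_quot_iff]
      have hfC : Ideal.Quotient.mk (Ideal.map (C : Q →+* R) I) f =
          Ideal.Quotient.mk _ (C (q (Fin.last d))) := by
        rw [Ideal.Quotient.mk_eq_mk_iff_sub_mem, hf, add_sub_cancel_right]
        refine Ideal.sum_mem _ fun i _ => Ideal.mul_mem_right _ _ ?_
        exact Ideal.mem_map_of_mem _ (hmemI i)
      rw [hfC]
      have e := (MvPolynomial.quotientEquivQuotientMvPolynomial (σ := Fin d) I).symm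
      rw [aux_ringEquiv e.toRingEquiv]
      have hcom : e.toRingEquiv (Ideal.Quotient.mk _ (C (q (Fin.last d)))) =
          C (Ideal.Quotient.mk I (q (Fin.last d))) := by
        have h3 : (Ideal.Quotient.mk (Ideal.map (C : Q →+* R) I)) (C (q (Fin.last d))) =
            algebraMap Q (R ⧸ Ideal.map (C : Q →+* R) I) (q (Fin.last d)) := rfl
        have h4 : algebraMap Q (MvPolynomial (Fin d) (Q ⧸ I)) (q (Fin.last d)) =
            C (Ideal.Quotient.mk I (q (Fin.last d))) := rfl
        rw [show (e.toRingEquiv : R ⧸ _ → MvPolynomial (Fin d) (Q ⧸ I)) = e from rfl,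
          h3, AlgEquiv.commutes, h4]
      rw [hcom]
      exact aux_isSMulRegular_C hqlast
  · -- properness
    intro h
    have h1 : (1 : R) ∈ Ideal.ofList
        ((List.ofFn fun i : Fin d => (C (q i.castSucc) : R)) ++ [f]) • (⊤ : Submodule R R) :=
      h ▸ Submodule.mem_top
    rw [aux_smul_top] at h1
    have hle : Ideal.ofList
        ((List.ofFn fun i : Fin d => (C (q i.castSucc) : R)) ++ [f]) ≤
        Ideal.map (C : Q →+* R) I' := by
      rw [Ideal.ofList_append, sup_le_iff]
      constructor
      · rw [hfront]
        exact Ideal.map_mono (Ideal.span_le.mpr fun x hx => by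
          simp only [Set.mem_setOf_eq, List.mem_ofFn] at hx
          obtain ⟨i, rfl⟩ := hx
          exact hmemI' i.castSucc)
      · rw [Ideal.ofList_singleton, Ideal.span_le, Set.singleton_subset_iff]
        refine Ideal.add_mem _ ?_ (Ideal.mem_map_of_mem _ (hmemI' (Fin.last d)))
        exact Ideal.sum_mem _ fun i _ =>
          Ideal.mul_mem_right _ _ (Ideal.mem_map_of_mem _ (hmemI' i.castSucc))
    have h2 : (1 : R) ∈ Ideal.map (C : Q →+* R) I' := hle h1
    -- evaluate at 0 to get a contradiction
    let φ : R →+* Q ⧸ I' :=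
      (eval₂Hom (Ideal.Quotient.mk I') fun _ => (0 : Q ⧸ I') : R →+* Q ⧸ I')
    have hker : Ideal.map (C : Q →+* R) I' ≤ RingHom.ker φ := by
      rw [Ideal.map_le_iff_le_comap]
      intro x hx
      have hCx : φ (C x) = Ideal.Quotient.mk I' x := eval₂Hom_C _ _ x
      simp only [Ideal.mem_comap, RingHom.mem_ker, hCx]
      exact (Ideal.Quotient.eq_zero_iff_mem).mpr hx
    have h3 : φ 1 = 0 := hker h2
    rw [map_one] at h3
    have h4 : (1 : Q) ∈ I' := by
      have h5 := (Ideal.Quotient.eq_zero_iff_mem (a := (1 : Q)) (I := I'))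
      rw [map_one] at h5
      exact h5.mp h3
    exact hI'ne (Ideal.eq_top_iff_one _ |>.mpr h4)
end

section
/- Let R be a commutative noetherian ring of finite injective dimension as a module over itself, let I ⊆ R be an ideal generated by an R-regular sequence, and set S = R/I. If A is an acyclic cochain complex of injective R-modules, then the cochain complex whose n-th term is Hom_R(S, A^n), with the induced differentials, is again acyclic, and each Hom_R(S, A^n) is an injective S-module. -/
open CategoryTheory Limits Opposite

/-- `Ext^i(M, N)` for `R`-modules, computed via the derived functor `Ext` of Mathlib. -/
noncomputable def extGroup (R : Type) [CommRing R] (M N : ModuleCat R) (i : ℕ) : ModuleCat R :=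
  ((Ext R (ModuleCat R) i).obj (op M)).obj N

/-- A commutative ring has finite injective dimension as a module over itself iff
`Ext^i(-, R)` vanishes uniformly in all large degrees `i`. -/
def HasFiniteSelfInjectiveDimension (R : Type) [CommRing R] : Prop :=
  ∃ n : ℕ, ∀ (N : ModuleCat R) (i : ℕ), n < i → IsZero (extGroup R N (ModuleCat.of R R) i)

/-- The `R ⧸ I`-module structure on `Hom_R(R ⧸ I, M)`: since the domain is annihilated by
`I`, so is the `R`-module `Hom_R(R ⧸ I, M)`, and the `R`-action descends to `R ⧸ I`. -/
noncomputable def homQuotientModule {R : Type} [CommRing R] (I : Ideal R)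
    (M : Type) [AddCommGroup M] [Module R M] :
    Module (R ⧸ I) ((R ⧸ I) →ₗ[R] M) :=
  Module.IsTorsionBySet.module (I := I) <| by
    intro f a
    refine LinearMap.ext fun t => ?_
    obtain ⟨s, rfl⟩ := Ideal.Quotient.mk_surjective t
    rw [LinearMap.smul_apply, ← map_smul]
    have h0 : (a : R) • (Ideal.Quotient.mk I s : R ⧸ I) = 0 := by
      have : (a : R) • (Ideal.Quotient.mk I s : R ⧸ I) =
          Ideal.Quotient.mk I ((a : R) * s) := rfl
      rw [this, Ideal.Quotient.eq_zero_iff_mem]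
      exact I.mul_mem_right s a.2
    rw [h0, map_zero, LinearMap.zero_apply]

section helpers

variable {R : Type} [CommRing R] (I : Ideal R)

lemma quot_smul_eq (r : R) (t : R ⧸ I) : r • t = Ideal.Quotient.mk I r * t := by
  obtain ⟨u, rfl⟩ := Ideal.Quotient.mk_surjective t
  rw [← map_mul, ← Ideal.Quotient.mk_eq_mk, ← Ideal.Quotient.mk_eq_mk,
    ← Submodule.Quotient.mk_smul, smul_eq_mul]

variable (M : Type) [AddCommGroup M] [Module R M]

lemma homQuot_smul_apply (s t : R ⧸ I) (f : (R ⧸ I) →ₗ[R] M) :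
    haveI := homQuotientModule I M
    (s • f) t = f (s * t) := by
  letI := homQuotientModule I M
  obtain ⟨r, rfl⟩ := Ideal.Quotient.mk_surjective s
  have h1 : (Ideal.Quotient.mk I r • f) = r • f := by with_unfolding_all rfl
  show (Ideal.Quotient.mk I r • f) t = _
  rw [h1, LinearMap.smul_apply, ← map_smul, quot_smul_eq]

theorem homQuot_injective (hM : Module.Injective R M) :
    @Module.Injective (R ⧸ I) _ ((R ⧸ I) →ₗ[R] M) _ (homQuotientModule I M) := by
  letI := homQuotientModule I M
  refine Module.Baer.injective (fun J g => ?_)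
  let ψ : (J.restrictScalars R) →ₗ[R] M :=
  { toFun := fun j => g ⟨j.1, j.2⟩ 1
    map_add' := by
      intro a b
      show g ⟨(a + b).1, (a + b).2⟩ 1 = g ⟨a.1, a.2⟩ 1 + g ⟨b.1, b.2⟩ 1
      have h3 : (⟨(a + b).1, (a + b).2⟩ : J) = ⟨a.1, a.2⟩ + ⟨b.1, b.2⟩ := rfl
      rw [h3, map_add, LinearMap.add_apply]
    map_smul' := by
      intro r j
      show g ⟨(r • j).1, (r • j).2⟩ 1 = r • g ⟨j.1, j.2⟩ 1
      have h2 : (⟨(r • j).1, (r • j).2⟩ : J) =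
          (Ideal.Quotient.mk I r) • ⟨j.1, j.2⟩ := by
        refine Subtype.ext ?_
        show r • (j : R ⧸ I) = Ideal.Quotient.mk I r • (j : R ⧸ I)
        rw [quot_smul_eq, smul_eq_mul]
      rw [h2, map_smul, homQuot_smul_apply, mul_one, ← map_smul, quot_smul_eq, mul_one] }
  obtain ⟨Ψ, hΨ⟩ := hM.out ((J.restrictScalars R).subtype) (Subtype.val_injective) ψ
  refine ⟨LinearMap.toSpanSingleton (R ⧸ I) _ Ψ, fun s hs => ?_⟩
  refine LinearMap.ext fun t => ?_
  rw [LinearMap.toSpanSingleton_apply]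
  have hst : s * t ∈ J.restrictScalars R := J.mul_mem_right t hs
  have hsub : (⟨s * t, hst⟩ : J) = t • (⟨s, hs⟩ : J) := by
    refine Subtype.ext ?_
    show s * t = t • s
    rw [smul_eq_mul, mul_comm]
  calc (s • Ψ) t = Ψ (s * t) := homQuot_smul_apply I M s t Ψ
    _ = Ψ ((J.restrictScalars R).subtype ⟨s * t, hst⟩) := rfl
    _ = ψ ⟨s * t, hst⟩ := hΨ ⟨s * t, hst⟩
    _ = g ⟨s * t, hst⟩ 1 := rfl
    _ = g (t • ⟨s, hs⟩) 1 := by rw [hsub]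
    _ = (t • g ⟨s, hs⟩) 1 := by rw [map_smul]
    _ = g ⟨s, hs⟩ (t * 1) := homQuot_smul_apply I M t 1 _
    _ = g ⟨s, hs⟩ t := by rw [mul_one]

end helpers

/-- Let `R` be a commutative noetherian ring of finite injective dimension
over itself, let `I` be an ideal generated by an `R`-regular sequence and `S = R ⧸ I`.
If `A` is an acyclic cochain complex of injective `R`-modules (terms `A n`, `n : ℤ`,
differentials `d n : A n → A (n+1)`), then the induced cochain complex with `n`-th term
`Hom_R(S, A n)` (differentials given by postcomposition with `d n`) is again acyclic, and
each `Hom_R(S, A n)` is an injective `S`-module. -/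
theorem hom_quotient_of_acyclic_injective_complex
    (R : Type) [CommRing R] [IsNoetherianRing R]
    (hGor : HasFiniteSelfInjectiveDimension R)
    (c : ℕ) (x : Fin c → R) (I : Ideal R)
    (hI : I = Ideal.span (Set.range x))
    (hregseq : RingTheory.Sequence.IsRegular R (List.ofFn x))
    (A : ℤ → Type) [∀ n, AddCommGroup (A n)] [∀ n, Module R (A n)]
    (hinj : ∀ n, Module.Injective R (A n))
    (d : ∀ n : ℤ, A n →ₗ[R] A (n + 1))
    (hexact : ∀ n : ℤ, LinearMap.range (d n) = LinearMap.ker (d (n + 1))) :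
    (∀ n : ℤ,
      LinearMap.range (LinearMap.llcomp R (R ⧸ I) (A n) (A (n + 1)) (σ₁₂ := RingHom.id R) (σ₁₃ := RingHom.id R) (d n)) =
        LinearMap.ker (LinearMap.llcomp R (R ⧸ I) (A (n + 1)) (A (n + 1 + 1)) (σ₁₂ := RingHom.id R) (σ₁₃ := RingHom.id R) (d (n + 1)))) ∧
    (∀ n : ℤ,
      @Module.Injective (R ⧸ I) _ ((R ⧸ I) →ₗ[R] A n) _ (homQuotientModule I (A n))) := by
  -- d ∘ d = 0
  have hdd : ∀ (n : ℤ) (a : A n), d (n + 1) (d n a) = 0 := fun n a =>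
    LinearMap.mem_ker.mp ((hexact n) ▸ LinearMap.mem_range_self (d n) a)
  -- cast helpers
  have cast_smul : ∀ (p q : ℤ) (hpq : p = q) (r : R) (y : A p),
      hpq ▸ (r • y) = r • (hpq ▸ y) := by
    intro p q hpq r y; subst hpq; rfl
  have cast_zero : ∀ (p q : ℤ) (hpq : p = q), hpq ▸ (0 : A p) = (0 : A q) := by
    intro p q hpq; subst hpq; rfl
  have hdd_cast : ∀ (p q : ℤ) (hpq : p + 1 = q) (y : A p),
      d q (hpq ▸ d p y) = 0 := by
    intro p q hpq y; subst hpq; exact hdd p y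
  -- the key element-level statement, by induction on the length of the partial sequence
  have key : ∀ (k : ℕ), k ≤ c → ∀ (m n : ℤ) (h : m + 1 = n) (b : A n),
      (∀ i : Fin c, (i : ℕ) < k → x i • b = 0) → d n b = 0 →
      ∃ a : A m, (∀ i : Fin c, (i : ℕ) < k → x i • a = 0) ∧ h ▸ (d m a) = b := by
    intro k
    induction k with
    | zero =>
      intro _ m n h b _ hb
      subst h
      have hmem : b ∈ LinearMap.range (d m) := by
        rw [hexact m]; exact LinearMap.mem_ker.mpr hb
      obtain ⟨a, ha⟩ := hmem
      exact ⟨a, fun i hi => absurd hi (Nat.not_lt_zero _), ha⟩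
    | succ k ih =>
      intro hk m n h b tb hb
      subst h
      have hkc : k < c := Nat.lt_of_succ_le hk
      have hk' : k ≤ c := Nat.le_of_succ_le hk
      obtain ⟨a₀, ta₀, ha₀⟩ :=
        ih hk' m (m + 1) rfl b (fun i hi => tb i (Nat.lt_succ_of_lt hi)) hb
      replace ha₀ : d m a₀ = b := ha₀
      set xk := x ⟨k, hkc⟩ with hxk
      -- w := xk • a₀ is a cocycle annihilated by the first k elements
      have hw0 : d m (xk • a₀) = 0 := by
        rw [map_smul, ha₀, tb ⟨k, hkc⟩ (Nat.lt_succ_self k)]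
      have tw : ∀ i : Fin c, (i : ℕ) < k → x i • (xk • a₀) = 0 := by
        intro i hi; rw [smul_comm, ta₀ i hi, smul_zero]
      have h₁ : (m - 1) + 1 = m := by ring
      obtain ⟨c₁, tc₁, hc₁⟩ := ih hk' (m - 1) m h₁ (xk • a₀) tw hw0
      -- the ideal generated by the first k elements
      set Ik : Ideal R := Ideal.span {r | ∃ i : Fin c, (i : ℕ) < k ∧ x i = r} with hIk
      have hmem_smul : ∀ (y : A (m - 1)),
          (∀ i : Fin c, (i : ℕ) < k → x i • y = 0) → ∀ r ∈ Ik, r • y = 0 := by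
        intro y ty r hr
        refine Submodule.span_induction ?_ ?_ ?_ ?_ hr
        · rintro r ⟨i, hi, rfl⟩; exact ty i hi
        · exact zero_smul R y
        · intro u v _ _ hu hv; rw [add_smul, hu, hv, add_zero]
        · intro t u _ hu; rw [smul_eq_mul, mul_smul, hu, smul_zero]
      -- xk is a nonzerodivisor mod Ik
      have hset : {r : R | r ∈ (List.ofFn x).take k}
          = {r : R | ∃ i : Fin c, (i : ℕ) < k ∧ x i = r} := by
        ext r
        simp only [Set.mem_setOf_eq]
        rw [List.mem_take_iff_getElem]
        constructor
        · rintro ⟨i, hi, rfl⟩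
          rw [List.getElem_ofFn]
          exact ⟨⟨i, by simpa using (lt_min_iff.mp (by simpa using hi)).2⟩,
            (lt_min_iff.mp (by simpa using hi)).1, rfl⟩
        · rintro ⟨i, hi, rfl⟩
          refine ⟨(i : ℕ), by simp [lt_min_iff, hi, i.isLt], ?_⟩
          rw [List.getElem_ofFn]
      have hIk_eq : (Ideal.ofList ((List.ofFn x).take k) • ⊤ : Submodule R R) = Ik := by
        rw [smul_eq_mul, Ideal.mul_top, hIk]
        show Ideal.span _ = Ideal.span _
        rw [hset]
      have hts := hregseq.toIsWeaklyRegular.regular_mod_prev k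
        (by rw [List.length_ofFn]; exact hkc)
      rw [List.getElem_ofFn] at hts
      rw [hIk_eq] at hts
      have hreg : ∀ t : R ⧸ Ik, Ideal.Quotient.mk Ik xk * t = 0 → t = 0 := by
        intro t ht
        have hxt : xk • t = Ideal.Quotient.mk Ik xk * t := quot_smul_eq Ik xk t
        have h0 : xk • t = xk • (0 : R ⧸ Ik) := by rw [smul_zero, hxt, ht]
        exact hts h0
      -- the coinduced module and its injectivity
      letI instQ := homQuotientModule Ik (A (m - 1))
      have hQinj := homQuot_injective Ik (A (m - 1)) (hinj (m - 1))
      -- the element c₁ as an element of Hom(R/Ik, A (m-1))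
      have hle : Ik ≤ LinearMap.ker (LinearMap.toSpanSingleton R (A (m - 1)) c₁) := by
        intro r hr
        rw [LinearMap.mem_ker, LinearMap.toSpanSingleton_apply]
        exact hmem_smul c₁ tc₁ r hr
      set chat : (R ⧸ Ik) →ₗ[R] A (m - 1) :=
        Submodule.liftQ Ik (LinearMap.toSpanSingleton R (A (m - 1)) c₁) hle with hchat
      have chat_mk : ∀ r : R, chat (Ideal.Quotient.mk Ik r) = r • c₁ := by
        intro r
        rw [hchat, ← Ideal.Quotient.mk_eq_mk, Submodule.liftQ_apply,
          LinearMap.toSpanSingleton_apply]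
      -- multiplication by xk on R/Ik is injective
      set xbar : R ⧸ Ik := Ideal.Quotient.mk Ik xk with hxbar
      have hmulinj : Function.Injective
          (LinearMap.toSpanSingleton (R ⧸ Ik) (R ⧸ Ik) xbar) := by
        intro t t' htt
        have h2 : xbar * (t - t') = 0 := by
          rw [mul_sub]
          rw [LinearMap.toSpanSingleton_apply, LinearMap.toSpanSingleton_apply] at htt
          rw [smul_eq_mul, smul_eq_mul] at htt
          rw [mul_comm xbar t, mul_comm xbar t', htt, sub_self]
        have := hreg (t - t') h2
        exact sub_eq_zero.mp this
      obtain ⟨Ψ, hΨ⟩ := hQinj.out (LinearMap.toSpanSingleton (R ⧸ Ik) (R ⧸ Ik) xbar)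
        hmulinj (LinearMap.toSpanSingleton (R ⧸ Ik) _ chat)
      -- e₀ := Ψ 1 1
      set ehat : (R ⧸ Ik) →ₗ[R] A (m - 1) := Ψ 1 with hehat
      have hΨ1 : Ψ xbar = chat := by
        have := hΨ 1
        rw [LinearMap.toSpanSingleton_apply, LinearMap.toSpanSingleton_apply,
          one_smul, one_smul] at this
        exact this
      have hxbar_ehat : xbar • ehat = chat := by
        rw [hehat, ← map_smul, smul_eq_mul, mul_one, hΨ1]
      set e₀ : A (m - 1) := ehat 1 with he₀
      have te₀ : ∀ i : Fin c, (i : ℕ) < k → x i • e₀ = 0 := by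
        intro i hi
        have hz : x i • (1 : R ⧸ Ik) = 0 := by
          rw [quot_smul_eq, mul_one, Ideal.Quotient.eq_zero_iff_mem]
          exact Ideal.subset_span ⟨i, hi, rfl⟩
        rw [he₀, ← map_smul, hz, map_zero]
      have hc₁e₀ : c₁ = xk • e₀ := by
        have h3 := LinearMap.congr_fun hxbar_ehat (1 : R ⧸ Ik)
        rw [homQuot_smul_apply, mul_one, hxbar] at h3
        have h4 : ehat (Ideal.Quotient.mk Ik xk) = xk • ehat 1 := by
          rw [← map_smul, quot_smul_eq, mul_one]
        rw [h4] at h3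
        have h5 : chat 1 = c₁ := by
          have h6 : (1 : R ⧸ Ik) = Ideal.Quotient.mk Ik 1 := rfl
          rw [h6, chat_mk, one_smul]
        rw [he₀, ← h5, ← h3]
      -- z kills the discrepancy
      set z : A m := h₁ ▸ (d (m - 1) e₀) with hz
      have hdz : d m z = 0 := hdd_cast (m - 1) m h₁ e₀
      have hxkz : xk • z = xk • a₀ := by
        rw [hz, ← cast_smul (m - 1 + 1) m h₁, ← map_smul, ← hc₁e₀, hc₁]
      have tz : ∀ i : Fin c, (i : ℕ) < k → x i • z = 0 := by
        intro i hi
        rw [hz, ← cast_smul (m - 1 + 1) m h₁, ← map_smul, te₀ i hi, map_zero,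
          cast_zero]
      refine ⟨a₀ - z, ?_, ?_⟩
      · intro i hi
        rcases Nat.lt_succ_iff_lt_or_eq.mp hi with hik | hik
        · rw [smul_sub, ta₀ i hik, tz i hik, sub_zero]
        · have : i = ⟨k, hkc⟩ := Fin.ext hik
          rw [this, ← hxk, smul_sub, hxkz, sub_self]
      · show d m (a₀ - z) = b
        rw [map_sub, ha₀, hdz, sub_zero]
  -- now derive the two statements
  constructor
  · intro n
    apply le_antisymm
    · rintro f ⟨g, rfl⟩
      rw [LinearMap.mem_ker]
      refine LinearMap.ext fun t => ?_
      rw [LinearMap.llcomp_apply, LinearMap.llcomp_apply, hdd, LinearMap.zero_apply]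
    · intro f hf
      rw [LinearMap.mem_ker] at hf
      -- the element b = f 1
      set b : A (n + 1) := f 1 with hb
      have tb : ∀ i : Fin c, (i : ℕ) < c → x i • b = 0 := by
        intro i _
        have hz : x i • (1 : R ⧸ I) = 0 := by
          rw [quot_smul_eq, mul_one, Ideal.Quotient.eq_zero_iff_mem, hI]
          exact Ideal.subset_span ⟨i, rfl⟩
        rw [hb, ← map_smul, hz, map_zero]
      have hdb : d (n + 1) b = 0 := by
        have := congrArg (fun g : (R ⧸ I) →ₗ[R] A (n + 1 + 1) => g 1) hf
        simpa [LinearMap.llcomp_apply] using this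
      obtain ⟨a, ta, ha⟩ := key c (le_refl c) n (n + 1) rfl b tb hdb
      replace ha : d n a = b := ha
      have hle : I ≤ LinearMap.ker (LinearMap.toSpanSingleton R (A n) a) := by
        rw [hI, Ideal.span_le]
        rintro r ⟨i, rfl⟩
        rw [SetLike.mem_coe, LinearMap.mem_ker, LinearMap.toSpanSingleton_apply]
        exact ta i i.isLt
      refine ⟨Submodule.liftQ I (LinearMap.toSpanSingleton R (A n) a) hle, ?_⟩
      refine LinearMap.ext fun t => ?_
      obtain ⟨r, rfl⟩ := Ideal.Quotient.mk_surjective t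
      rw [LinearMap.llcomp_apply, ← Ideal.Quotient.mk_eq_mk, Submodule.liftQ_apply,
        LinearMap.toSpanSingleton_apply, map_smul, ha, hb, ← map_smul,
        Ideal.Quotient.mk_eq_mk, quot_smul_eq, mul_one]
  · intro n
    exact homQuot_injective I (A n) (hinj n)
end
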